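/- There exists a constant C > 0 independent of n such that for every positive integer n and all x ∈ [−1,1], |√(1−x²) · T_n''(x)| ≤ C·n³. -/

import Mathlib

open Polynomial Polynomial.Chebyshev

private lemma abs_sin_nat_mul_le' (n : ℕ) (t : ℝ) :
    |Real.sin (n * t)| ≤ n * |Real.sin t| := by
  induction n with
  | zero => simp
  | succ n ih =>
    have h : ((n : ℝ) + 1) * t = n * t + t := by ring
    rw [Nat.cast_succ, h, Real.sin_add]
    calc |Real.sin (n*t) * Real.cos t + Real.cos (n*t) * Real.sin t|
        ≤ |Real.sin (n*t) * Real.cos t| + |Real.cos (n*t) * Real.sin t| := abs_add_le _ _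
      _ ≤ |Real.sin (n*t)| * 1 + 1 * |Real.sin t| := by
          rw [abs_mul, abs_mul]
          gcongr
          · exact Real.abs_cos_le_one t
          · exact Real.abs_cos_le_one _
      _ ≤ (n : ℝ) * |Real.sin t| + 1 * |Real.sin t| := by
          rw [mul_one]
          gcongr
      _ = ((n : ℝ) + 1) * |Real.sin t| := by ring

/-- `fh n θ = sin nθ cos θ - n cos nθ sin θ`. -/
private noncomputable def fh (n : ℕ) (θ : ℝ) : ℝ :=
  Real.sin (n * θ) * Real.cos θ - n * Real.cos (n * θ) * Real.sin θ

private lemma fh_hasDerivAt (n : ℕ) (t : ℝ) :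
    HasDerivAt (fh n) (((n : ℝ) ^ 2 - 1) * (Real.sin (n * t) * Real.sin t)) t := by
  have hnt : HasDerivAt (fun x : ℝ => (n : ℝ) * x) ((n : ℝ)) t := by
    simpa using (hasDerivAt_id t).const_mul (n : ℝ)
  have hs : HasDerivAt (fun x : ℝ => Real.sin ((n : ℝ) * x))
      (Real.cos ((n : ℝ) * t) * (n : ℝ)) t :=
    (Real.hasDerivAt_sin ((n : ℝ) * t)).comp t hnt
  have hc : HasDerivAt (fun x : ℝ => Real.cos ((n : ℝ) * x))
      (-Real.sin ((n : ℝ) * t) * (n : ℝ)) t :=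
    (Real.hasDerivAt_cos ((n : ℝ) * t)).comp t hnt
  have h1 := (hs.mul (Real.hasDerivAt_cos t)).sub
    (((hc.const_mul (n : ℝ)).mul (Real.hasDerivAt_sin t)))
  exact h1.congr_deriv (by ring)

private lemma fh_eq_integral (n : ℕ) (θ : ℝ) :
    fh n θ = ∫ t in (0:ℝ)..θ, ((n : ℝ) ^ 2 - 1) * (Real.sin (n * t) * Real.sin t) := by
  have hcont : Continuous fun t : ℝ => ((n : ℝ) ^ 2 - 1) * (Real.sin (n * t) * Real.sin t) := by
    fun_prop
  have := intervalIntegral.integral_eq_sub_of_hasDerivAt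
    (f := fh n) (f' := fun t => ((n : ℝ) ^ 2 - 1) * (Real.sin (n * t) * Real.sin t))
    (a := 0) (b := θ) (fun t _ => fh_hasDerivAt n t) (hcont.intervalIntegrable 0 θ)
  have h0 : fh n 0 = 0 := by simp [fh]
  rw [this, h0, sub_zero]

private lemma fh_bound_aux (n : ℕ) (hn : 1 ≤ n) (θ : ℝ) (h0 : 0 ≤ θ) (c : ℝ)
    (hb : ∀ t ∈ Set.Icc (0:ℝ) θ, |Real.sin (n * t)| ≤ c)
    (hsin : ∀ t ∈ Set.Icc (0:ℝ) θ, 0 ≤ Real.sin t) :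
    |fh n θ| ≤ ((n : ℝ) ^ 2 - 1) * c * (1 - Real.cos θ) := by
  have hn1 : (1:ℝ) ≤ (n:ℝ) := by exact_mod_cast hn
  have hnsq : (0:ℝ) ≤ (n:ℝ) ^ 2 - 1 := by nlinarith
  rw [fh_eq_integral]
  have h1 : |∫ t in (0:ℝ)..θ, ((n : ℝ) ^ 2 - 1) * (Real.sin (n * t) * Real.sin t)|
      ≤ ∫ t in (0:ℝ)..θ, |((n : ℝ) ^ 2 - 1) * (Real.sin (n * t) * Real.sin t)| :=
    intervalIntegral.abs_integral_le_integral_abs h0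
  have h2 : ∫ t in (0:ℝ)..θ, |((n : ℝ) ^ 2 - 1) * (Real.sin (n * t) * Real.sin t)|
      ≤ ∫ t in (0:ℝ)..θ, ((n : ℝ) ^ 2 - 1) * c * Real.sin t := by
    apply intervalIntegral.integral_mono_on h0
    · exact ((continuous_const.mul ((Real.continuous_sin.comp
        (continuous_const.mul continuous_id)).mul Real.continuous_sin)).abs).intervalIntegrable 0 θ
    · exact ((continuous_const.mul Real.continuous_sin)).intervalIntegrable 0 θ
    · intro t ht
      have h3 : |Real.sin t| = Real.sin t := abs_of_nonneg (hsin t ht)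
      rw [abs_mul, abs_mul, h3, abs_of_nonneg hnsq]
      have h4 : |Real.sin (n * t)| * Real.sin t ≤ c * Real.sin t :=
        mul_le_mul_of_nonneg_right (hb t ht) (hsin t ht)
      calc ((n:ℝ)^2 - 1) * (|Real.sin (n*t)| * Real.sin t)
          ≤ ((n:ℝ)^2 - 1) * (c * Real.sin t) := mul_le_mul_of_nonneg_left h4 hnsq
        _ = ((n:ℝ)^2 - 1) * c * Real.sin t := by ring
  have h4 : ∫ t in (0:ℝ)..θ, ((n : ℝ) ^ 2 - 1) * c * Real.sin t
      = ((n : ℝ) ^ 2 - 1) * c * (1 - Real.cos θ) := by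
    rw [intervalIntegral.integral_const_mul, integral_sin, Real.cos_zero]
  rw [h4] at h2
  linarith

private lemma fh_key (n : ℕ) (hn : 1 ≤ n) (θ : ℝ) (hθ : θ ∈ Set.Icc 0 (Real.pi / 2)) :
    |fh n θ| ≤ (n : ℝ) ^ 2 * Real.sin θ ^ 2 := by
  obtain ⟨h0, h2⟩ := hθ
  have hπ : θ ≤ Real.pi := le_trans h2 (by linarith [Real.pi_pos])
  have hsin : ∀ t ∈ Set.Icc (0:ℝ) θ, 0 ≤ Real.sin t := fun t ht =>
    Real.sin_nonneg_of_nonneg_of_le_pi ht.1 (le_trans ht.2 hπ)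
  have hsθ : 0 ≤ Real.sin θ := Real.sin_nonneg_of_nonneg_of_le_pi h0 hπ
  have hcθ : 0 ≤ Real.cos θ := Real.cos_nonneg_of_mem_Icc ⟨by linarith [Real.pi_pos], h2⟩
  have hcos1 : 1 - Real.cos θ ≤ Real.sin θ ^ 2 := by
    nlinarith [Real.sin_sq_add_cos_sq θ, Real.cos_le_one θ]
  have hcos0 : 0 ≤ 1 - Real.cos θ := by linarith [Real.cos_le_one θ]
  have hn1 : (1:ℝ) ≤ (n:ℝ) := by exact_mod_cast hn
  have hnsq : (0:ℝ) ≤ (n:ℝ) ^ 2 - 1 := by nlinarith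
  have hs2 : 0 ≤ Real.sin θ ^ 2 := sq_nonneg _
  by_cases hcase : 1 ≤ (n : ℝ) * Real.sin θ
  · have hb := fh_bound_aux n hn θ h0 1 (fun t _ => Real.abs_sin_le_one _) hsin
    calc |fh n θ| ≤ ((n:ℝ)^2 - 1) * 1 * (1 - Real.cos θ) := hb
      _ ≤ ((n:ℝ)^2 - 1) * Real.sin θ ^ 2 := by nlinarith
      _ ≤ (n:ℝ)^2 * Real.sin θ ^ 2 := by nlinarith
  · push_neg at hcase
    have hmono : ∀ t ∈ Set.Icc (0:ℝ) θ, |Real.sin (n * t)| ≤ (n : ℝ) * Real.sin θ := by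
      intro t ht
      calc |Real.sin (n * t)| ≤ (n : ℝ) * |Real.sin t| := abs_sin_nat_mul_le' n t
        _ = (n : ℝ) * Real.sin t := by rw [abs_of_nonneg (hsin t ht)]
        _ ≤ (n : ℝ) * Real.sin θ := by
            have := Real.sin_le_sin_of_le_of_le_pi_div_two
              (by linarith [ht.1, Real.pi_pos] : -(Real.pi/2) ≤ t) h2 ht.2
            have hn0 : (0:ℝ) ≤ (n:ℝ) := by linarith
            exact mul_le_mul_of_nonneg_left this hn0
    have hb := fh_bound_aux n hn θ h0 ((n:ℝ) * Real.sin θ) hmono hsin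
    have hns : 0 ≤ (n:ℝ) * Real.sin θ := by positivity
    calc |fh n θ| ≤ ((n:ℝ)^2 - 1) * ((n:ℝ) * Real.sin θ) * (1 - Real.cos θ) := hb
      _ ≤ ((n:ℝ)^2 - 1) * 1 * (1 - Real.cos θ) := by
          nlinarith [mul_le_mul_of_nonneg_left hcase.le (mul_nonneg hnsq hcos0)]
      _ ≤ (n:ℝ)^2 * Real.sin θ ^ 2 := by nlinarith

private lemma fh_key' (n : ℕ) (hn : 1 ≤ n) (θ : ℝ) (hθ : θ ∈ Set.Icc 0 Real.pi) :
    |fh n θ| ≤ (n : ℝ) ^ 2 * Real.sin θ ^ 2 := by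
  obtain ⟨h0, hπ⟩ := hθ
  by_cases h2 : θ ≤ Real.pi / 2
  · exact fh_key n hn θ ⟨h0, h2⟩
  · push_neg at h2
    have hsym : |fh n θ| = |fh n (Real.pi - θ)| := by
      have e1 : (n : ℝ) * (Real.pi - θ) = (n : ℝ) * Real.pi - (n : ℝ) * θ := by ring
      have e2 : Real.sin ((n:ℝ) * Real.pi - (n:ℝ) * θ) = -((-1)^n * Real.sin ((n:ℝ)*θ)) :=
        Real.sin_nat_mul_pi_sub _ n
      have e3 : Real.cos ((n:ℝ) * Real.pi - (n:ℝ) * θ) = (-1)^n * Real.cos ((n:ℝ)*θ) :=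
        Real.cos_nat_mul_pi_sub _ n
      have e4 : fh n (Real.pi - θ) = (-1)^n * fh n θ := by
        simp only [fh, e1, e2, e3, Real.sin_pi_sub, Real.cos_pi_sub]
        ring
      rw [e4, abs_mul, abs_pow, abs_neg, abs_one, one_pow, one_mul]
    have hsin : Real.sin θ = Real.sin (Real.pi - θ) := (Real.sin_pi_sub θ).symm
    rw [hsym, hsin]
    exact fh_key n hn (Real.pi - θ) ⟨by linarith, by linarith⟩

private lemma chebyshev_first_deriv (n : ℕ) (θ : ℝ) :
    Real.sin θ * (derivative (T ℝ n)).eval (Real.cos θ) = (n : ℝ) * Real.sin ((n : ℝ) * θ) := by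
  have hfun : (fun t : ℝ => (T ℝ n).eval (Real.cos t)) = fun t : ℝ => Real.cos ((n : ℝ) * t) := by
    funext t
    have := T_real_cos t (n : ℤ)
    push_cast at this
    exact this
  have h1 : HasDerivAt (fun t : ℝ => (T ℝ n).eval (Real.cos t))
      ((derivative (T ℝ n)).eval (Real.cos θ) * -Real.sin θ) θ :=
    ((T ℝ n).hasDerivAt (Real.cos θ)).comp θ (Real.hasDerivAt_cos θ)
  rw [hfun] at h1
  have hnt : HasDerivAt (fun x : ℝ => (n : ℝ) * x) ((n : ℝ)) θ := by
    simpa using (hasDerivAt_id θ).const_mul (n : ℝ)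
  have h2 : HasDerivAt (fun t : ℝ => Real.cos ((n : ℝ) * t))
      (-Real.sin ((n : ℝ) * θ) * (n : ℝ)) θ :=
    (Real.hasDerivAt_cos ((n : ℝ) * θ)).comp θ hnt
  have h3 := h1.unique h2
  linear_combination -h3

private lemma chebyshev_second_deriv (n : ℕ) (θ : ℝ) :
    Real.sin θ ^ 2 * (derivative (derivative (T ℝ n))).eval (Real.cos θ)
      = Real.cos θ * (derivative (T ℝ n)).eval (Real.cos θ)
        - (n : ℝ) ^ 2 * Real.cos ((n : ℝ) * θ) := by
  have hfun : (fun t : ℝ => Real.sin t * (derivative (T ℝ n)).eval (Real.cos t))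
      = fun t : ℝ => (n : ℝ) * Real.sin ((n : ℝ) * t) := by
    funext t; exact chebyshev_first_deriv n t
  have h1 : HasDerivAt (fun t : ℝ => Real.sin t * (derivative (T ℝ n)).eval (Real.cos t))
      (Real.cos θ * (derivative (T ℝ n)).eval (Real.cos θ)
        + Real.sin θ * ((derivative (derivative (T ℝ n))).eval (Real.cos θ) * -Real.sin θ)) θ :=
    (Real.hasDerivAt_sin θ).mul
      (((derivative (T ℝ n)).hasDerivAt (Real.cos θ)).comp θ (Real.hasDerivAt_cos θ))
  rw [hfun] at h1
  have hnt : HasDerivAt (fun x : ℝ => (n : ℝ) * x) ((n : ℝ)) θ := by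
    simpa using (hasDerivAt_id θ).const_mul (n : ℝ)
  have h2 : HasDerivAt (fun t : ℝ => (n : ℝ) * Real.sin ((n : ℝ) * t))
      ((n : ℝ) * (Real.cos ((n : ℝ) * θ) * (n : ℝ))) θ :=
    ((Real.hasDerivAt_sin ((n : ℝ) * θ)).comp θ hnt).const_mul (n : ℝ)
  have h3 := h1.unique h2
  linear_combination -h3

/-- There exists C > 0 independent of n with |√(1−x²)·T_n''(x)| ≤ C·n³ on [−1,1]. -/
theorem chebyshev_weighted_second_derivative_T_bound :
    ∃ C : ℝ, 0 < C ∧ ∀ n : ℕ, 0 < n → ∀ x ∈ Set.Icc (-1 : ℝ) 1,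
      |Real.sqrt (1 - x ^ 2) *
          (Polynomial.derivative (Polynomial.derivative (T ℝ n))).eval x| ≤ C * (n : ℝ) ^ 3 := by
  refine ⟨1, one_pos, fun n hn x hx => ?_⟩
  obtain ⟨hx1, hx2⟩ := hx
  set θ := Real.arccos x with hθdef
  have hθmem : θ ∈ Set.Icc 0 Real.pi := ⟨Real.arccos_nonneg x, Real.arccos_le_pi x⟩
  have hcos : Real.cos θ = x := Real.cos_arccos hx1 hx2
  have hsin : Real.sin θ = Real.sqrt (1 - x ^ 2) := Real.sin_arccos x
  have hsin0 : 0 ≤ Real.sin θ := Real.sin_nonneg_of_nonneg_of_le_pi hθmem.1 hθmem.2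
  have hid : Real.sin θ ^ 3 * (derivative (derivative (T ℝ n))).eval (Real.cos θ)
      = (n : ℝ) * fh n θ := by
    simp only [fh]
    linear_combination Real.sin θ * chebyshev_second_deriv n θ
      + Real.cos θ * chebyshev_first_deriv n θ
  rw [hcos] at hid
  have hkey := fh_key' n hn θ hθmem
  rcases eq_or_lt_of_le hsin0 with h0 | h0
  · rw [hsin] at h0
    rw [← h0, zero_mul, abs_zero]
    positivity
  · rw [← hsin]
    have hgoal : |Real.sin θ * (derivative (derivative (T ℝ n))).eval x| * Real.sin θ ^ 2
        ≤ (n : ℝ) ^ 3 * Real.sin θ ^ 2 := by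
      have e1 : |Real.sin θ * (derivative (derivative (T ℝ n))).eval x| * Real.sin θ ^ 2
          = |Real.sin θ ^ 3 * (derivative (derivative (T ℝ n))).eval x| := by
        rw [abs_mul, abs_mul, abs_of_nonneg hsin0, abs_of_nonneg (pow_nonneg hsin0 3)]
        ring
      rw [e1, hid, abs_mul, Nat.abs_cast]
      calc (n : ℝ) * |fh n θ| ≤ (n : ℝ) * ((n : ℝ) ^ 2 * Real.sin θ ^ 2) := by
            have hn0 : (0:ℝ) ≤ (n:ℝ) := Nat.cast_nonneg n
            exact mul_le_mul_of_nonneg_left hkey hn0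
        _ = (n : ℝ) ^ 3 * Real.sin θ ^ 2 := by ring
    have hs2 : 0 < Real.sin θ ^ 2 := by positivity
    have h5 := (mul_le_mul_iff_of_pos_right hs2).mp hgoal
    linarith
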